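/- Let 0 < s < 1 and μ > 0. Then the integral A(s,μ) := ∫_0^∞ ρ^{s-1}·[ ((1+s)ρ/(1+ρ))·( (μ/(1+ρ))/tanh(μ/(1+ρ)) − 1 ) − ((1−s)/(1+ρ))·( (ρμ/(1+ρ))/tanh(ρμ/(1+ρ)) − 1 ) ]·( (ρμ/(1+ρ))/sinh(ρμ/(1+ρ)) )^{1−s}·( (μ/(1+ρ))/sinh(μ/(1+ρ)) )^{1+s} dρ vanishes: A(s,μ) = 0. -/

import Mathlib

open MeasureTheory Real Filter Set Topology

lemma sinh_le_mul_cosh {x : ℝ} (hx : 0 ≤ x) : Real.sinh x ≤ x * Real.cosh x := by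
  have hd : ∀ t : ℝ, HasDerivAt (fun t : ℝ => t * Real.cosh t - Real.sinh t) (t * Real.sinh t) t := by
    intro t
    have h := ((hasDerivAt_id t).mul (Real.hasDerivAt_cosh t)).sub (Real.hasDerivAt_sinh t)
    refine h.congr_deriv ?_
    simp only [Pi.mul_apply, id_eq]; ring
  have hm : MonotoneOn (fun t : ℝ => t * Real.cosh t - Real.sinh t) (Set.Ici 0) := by
    apply monotoneOn_of_deriv_nonneg (convex_Ici 0)
    · exact (Continuous.continuousOn (by continuity))
    · intro t ht
      exact (hd t).differentiableAt.differentiableWithinAt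
    · intro t ht
      rw [(hd t).deriv]
      rw [interior_Ici] at ht
      have : 0 < t := ht
      positivity
  have := hm (Set.self_mem_Ici) hx hx
  simp only [Real.cosh_zero, Real.sinh_zero, mul_one, zero_mul] at this
  linarith

-- x / sinh x → 1 as x → 0 (punctured)
lemma tendsto_div_sinh : Tendsto (fun x : ℝ => x / Real.sinh x) (𝓝[≠] (0:ℝ)) (𝓝 1) := by
  have h := hasDerivAt_iff_tendsto_slope.mp (Real.hasDerivAt_sinh 0)
  simp only [Real.cosh_zero] at h
  have h2 : Tendsto (fun x : ℝ => Real.sinh x / x) (𝓝[≠] (0:ℝ)) (𝓝 1) := by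
    refine h.congr' ?_
    filter_upwards [self_mem_nhdsWithin] with x hx
    simp [slope_def_field, Real.sinh_zero]
  have h3 := h2.inv₀ (by norm_num)
  simp only [inv_one] at h3
  refine h3.congr' ?_
  filter_upwards with x
  rw [inv_div]

lemma tendsto_sinh_slope (μ : ℝ) :
    Tendsto (fun x : ℝ => (Real.sinh μ - Real.sinh (μ - x)) / x) (𝓝[≠] (0:ℝ)) (𝓝 (Real.cosh μ)) := by
  have hD : HasDerivAt (fun x : ℝ => Real.sinh (μ - x)) (-Real.cosh μ) 0 := by
    have h := (((hasDerivAt_id (0:ℝ)).const_sub μ).sinh)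
    convert h using 1 <;> simp
  have h := hasDerivAt_iff_tendsto_slope.mp hD
  have h2 := h.neg
  rw [neg_neg] at h2
  refine h2.congr' ?_
  filter_upwards [self_mem_nhdsWithin] with x hx
  simp only [slope_def_field, sub_zero]
  ring

lemma tendsto_cosh_slope : Tendsto (fun x : ℝ => (Real.cosh x - 1) / x) (𝓝[≠] (0:ℝ)) (𝓝 0) := by
  have h := hasDerivAt_iff_tendsto_slope.mp (Real.hasDerivAt_cosh 0)
  simp only [Real.sinh_zero] at h
  refine h.congr' ?_
  filter_upwards [self_mem_nhdsWithin] with x hx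
  simp [slope_def_field, Real.cosh_zero]

lemma tendsto_sinh_sub_self : Tendsto (fun x : ℝ => (Real.sinh x - x) / x ^ 2) (𝓝[>] (0:ℝ)) (𝓝 0) := by
  have hupper : Tendsto (fun x : ℝ => (Real.cosh x - 1) / x) (𝓝[>] (0:ℝ)) (𝓝 0) :=
    tendsto_cosh_slope.mono_left (nhdsWithin_mono 0 (fun x hx => ne_of_gt hx))
  refine tendsto_of_tendsto_of_tendsto_of_le_of_le' tendsto_const_nhds hupper ?_ ?_
  · filter_upwards [self_mem_nhdsWithin] with x hx
    have hx' : (0:ℝ) < x := hx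
    have h1 : x < Real.sinh x := Real.self_lt_sinh_iff.mpr hx'
    have h2 : (0:ℝ) < x ^ 2 := by positivity
    have h3 : (0:ℝ) ≤ Real.sinh x - x := by linarith
    exact div_nonneg h3 h2.le
  · filter_upwards [self_mem_nhdsWithin] with x hx
    have h1 : Real.sinh x ≤ x * Real.cosh x := sinh_le_mul_cosh hx.le
    have hx' : (0:ℝ) < x := hx
    rw [div_le_div_iff₀ (by positivity) hx']
    nlinarith [mul_le_mul_of_nonneg_right (show Real.sinh x - x ≤ x * (Real.cosh x - 1) by nlinarith) hx'.le]

noncomputable def hfun (s μ : ℝ) (ρ : ℝ) : ℝ :=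
  (Real.sinh (ρ * μ / (1 + ρ)) / Real.sinh (μ / (1 + ρ))) ^ s *
    (μ / (1 + ρ) * (ρ * μ / (1 + ρ)) /
      (Real.sinh (μ / (1 + ρ)) * Real.sinh (ρ * μ / (1 + ρ))) - μ / Real.sinh μ)

noncomputable def Ffun (s μ : ℝ) (ρ : ℝ) : ℝ :=
  ρ ^ (s - 1) *
      (((1 + s) * ρ / (1 + ρ)) * ((μ / (1 + ρ)) / Real.tanh (μ / (1 + ρ)) - 1) -
        ((1 - s) / (1 + ρ)) *
          ((ρ * μ / (1 + ρ)) / Real.tanh (ρ * μ / (1 + ρ)) - 1)) *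
    ((ρ * μ / (1 + ρ)) / Real.sinh (ρ * μ / (1 + ρ))) ^ (1 - s) *
    ((μ / (1 + ρ)) / Real.sinh (μ / (1 + ρ))) ^ (1 + s)

lemma hasDerivAt_hfun (s μ : ℝ) (hμ : 0 < μ) {ρ : ℝ} (hρ : 0 < ρ) :
    HasDerivAt (hfun s μ) (Ffun s μ ρ) ρ := by
  have h1ρ : (0:ℝ) < 1 + ρ := by linarith
  have h1ρ' : (1:ℝ) + ρ ≠ 0 := h1ρ.ne'
  have hupos : 0 < μ / (1 + ρ) := by positivity
  have hvpos : 0 < ρ * μ / (1 + ρ) := by positivity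
  have hapos : 0 < Real.sinh (μ / (1 + ρ)) := Real.sinh_pos_iff.mpr hupos
  have hbpos : 0 < Real.sinh (ρ * μ / (1 + ρ)) := Real.sinh_pos_iff.mpr hvpos
  have hu : HasDerivAt (fun ρ : ℝ => μ / (1 + ρ)) (-(μ / (1 + ρ) ^ 2)) ρ := by
    have h := (hasDerivAt_const ρ μ).div ((hasDerivAt_id ρ).const_add 1) h1ρ'
    refine h.congr_deriv ?_
    simp only [id_eq]; ring
  have hv : HasDerivAt (fun ρ : ℝ => ρ * μ / (1 + ρ)) (μ / (1 + ρ) ^ 2) ρ := by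
    have h := ((hasDerivAt_id ρ).mul_const μ).div ((hasDerivAt_id ρ).const_add 1) h1ρ'
    refine h.congr_deriv ?_
    simp only [id_eq]; ring
  have ha := hu.sinh
  have hb := hv.sinh
  have hq := hb.div ha hapos.ne'
  have hP := hq.rpow_const (p := s) (Or.inl (div_pos hbpos hapos).ne')
  have hI := ((hu.mul hv).div (ha.mul hb) (mul_pos hapos hbpos).ne').sub_const (μ / Real.sinh μ)
  have H := hP.mul hI
  refine H.congr_deriv ?_
  symm
  simp only [Ffun, Pi.div_apply, Pi.mul_apply]
  have hsinhμ : Real.sinh μ = Real.sinh (μ / (1 + ρ)) * Real.cosh (ρ * μ / (1 + ρ)) +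
      Real.cosh (μ / (1 + ρ)) * Real.sinh (ρ * μ / (1 + ρ)) := by
    rw [← Real.sinh_add]
    congr 1
    field_simp
  rw [Real.tanh_eq_sinh_div_cosh, Real.tanh_eq_sinh_div_cosh, hsinhμ]
  rw [Real.div_rpow hbpos.le hapos.le, Real.div_rpow hbpos.le hapos.le,
    Real.div_rpow hvpos.le hbpos.le, Real.div_rpow hupos.le hapos.le]
  rw [Real.rpow_sub hρ, Real.rpow_sub hbpos, Real.rpow_sub hapos,
    Real.rpow_sub hvpos, Real.rpow_sub hbpos, Real.rpow_add hupos, Real.rpow_add hapos]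
  simp only [Real.rpow_one]
  rw [show ρ * μ / (1 + ρ) = ρ * (μ / (1 + ρ)) by ring]
  rw [Real.mul_rpow hρ.le hupos.le]
  have hA : Real.sinh (μ / (1 + ρ)) ^ s ≠ 0 := (Real.rpow_pos_of_pos hapos s).ne'
  have hB : Real.sinh (ρ * (μ / (1 + ρ))) ^ s ≠ 0 := by
    rw [show ρ * (μ / (1 + ρ)) = ρ * μ / (1 + ρ) by ring]
    exact (Real.rpow_pos_of_pos hbpos s).ne'
  have hR : ρ ^ s ≠ 0 := (Real.rpow_pos_of_pos hρ s).ne'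
  have hU : (μ / (1 + ρ)) ^ s ≠ 0 := (Real.rpow_pos_of_pos hupos s).ne'
  have hca : Real.cosh (μ / (1 + ρ)) ≠ 0 := (Real.cosh_pos _).ne'
  have hcb : Real.cosh (ρ * (μ / (1 + ρ))) ≠ 0 := (Real.cosh_pos _).ne'
  have hane : Real.sinh (μ / (1 + ρ)) ≠ 0 := hapos.ne'
  have hbne : Real.sinh (ρ * (μ / (1 + ρ))) ≠ 0 := by
    rw [show ρ * (μ / (1 + ρ)) = ρ * μ / (1 + ρ) by ring]
    exact hbpos.ne'
  field_simp
  ring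

lemma hfun_zero (s μ : ℝ) (hs0 : 0 < s) : hfun s μ 0 = 0 := by
  simp [hfun, Real.zero_rpow hs0.ne']

lemma hfun_contWithin (s μ : ℝ) (hs0 : 0 < s) (hμ : 0 < μ) :
    ContinuousWithinAt (hfun s μ) (Set.Ici 0) 0 := by
  have hsμ : Real.sinh μ ≠ 0 := (Real.sinh_pos_iff.mpr hμ).ne'
  have hcu : ContinuousAt (fun ρ : ℝ => μ / (1 + ρ)) 0 :=
    ContinuousAt.div continuousAt_const (continuousAt_const.add continuousAt_id) (by norm_num)
  have hcv : ContinuousAt (fun ρ : ℝ => ρ * μ / (1 + ρ)) 0 :=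
    ContinuousAt.div (continuousAt_id.mul continuousAt_const) (continuousAt_const.add continuousAt_id)
      (by norm_num)
  have hcda : ContinuousAt (fun ρ : ℝ => Real.sinh (μ / (1 + ρ))) 0 :=
    Real.continuous_sinh.continuousAt.comp hcu
  have hcdb : ContinuousAt (fun ρ : ℝ => Real.sinh (ρ * μ / (1 + ρ))) 0 :=
    Real.continuous_sinh.continuousAt.comp hcv
  have htend : Tendsto (hfun s μ) (𝓝[>] (0:ℝ)) (𝓝 0) := by
    have t1 : Tendsto (fun ρ : ℝ => (Real.sinh (ρ * μ / (1 + ρ)) / Real.sinh (μ / (1 + ρ))) ^ s)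
        (𝓝[>] (0:ℝ)) (𝓝 0) := by
      have hbase : Tendsto (fun ρ : ℝ => Real.sinh (ρ * μ / (1 + ρ)) / Real.sinh (μ / (1 + ρ)))
          (𝓝[>] (0:ℝ)) (𝓝 0) := by
        have hc : ContinuousAt (fun ρ : ℝ => Real.sinh (ρ * μ / (1 + ρ)) / Real.sinh (μ / (1 + ρ))) 0 :=
          ContinuousAt.div hcdb hcda (by simpa using hsμ)
        have := hc.continuousWithinAt (s := Set.Ioi 0)
        simpa [ContinuousWithinAt] using this
      have hrpow : ContinuousAt (fun x : ℝ => x ^ s) 0 :=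
        Real.continuousAt_rpow_const 0 s (Or.inr hs0.le)
      have := hrpow.tendsto.comp hbase
      simpa [Function.comp_def, Real.zero_rpow hs0.ne'] using this
    have t2 : Tendsto (fun ρ : ℝ => μ / (1 + ρ) * (ρ * μ / (1 + ρ)) /
        (Real.sinh (μ / (1 + ρ)) * Real.sinh (ρ * μ / (1 + ρ))) - μ / Real.sinh μ)
        (𝓝[>] (0:ℝ)) (𝓝 (μ / Real.sinh μ * 1 - μ / Real.sinh μ)) := by
      have e1 : Tendsto (fun ρ : ℝ => μ / (1 + ρ) / Real.sinh (μ / (1 + ρ))) (𝓝[>] (0:ℝ))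
          (𝓝 (μ / Real.sinh μ)) := by
        have hc : ContinuousAt (fun ρ : ℝ => μ / (1 + ρ) / Real.sinh (μ / (1 + ρ))) 0 :=
          ContinuousAt.div hcu hcda (by simpa using hsμ)
        have := hc.continuousWithinAt (s := Set.Ioi 0)
        simpa [ContinuousWithinAt] using this
      have e2 : Tendsto (fun ρ : ℝ => ρ * μ / (1 + ρ) / Real.sinh (ρ * μ / (1 + ρ))) (𝓝[>] (0:ℝ))
          (𝓝 1) := by
        have hv : Tendsto (fun ρ : ℝ => ρ * μ / (1 + ρ)) (𝓝[>] (0:ℝ)) (𝓝[≠] (0:ℝ)) := by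
          rw [tendsto_nhdsWithin_iff]
          constructor
          · have := hcv.continuousWithinAt (s := Set.Ioi 0)
            simpa [ContinuousWithinAt] using this
          · filter_upwards [self_mem_nhdsWithin] with ρ hρ
            have hρ' : (0:ℝ) < ρ := hρ
            have : 0 < ρ * μ / (1 + ρ) := by positivity
            exact this.ne'
        exact tendsto_div_sinh.comp hv
      have := (e1.mul e2).sub_const (μ / Real.sinh μ)
      refine this.congr' ?_
      filter_upwards [self_mem_nhdsWithin] with ρ hρ
      have hρ' : (0:ℝ) < ρ := hρ
      have h1ρ : (0:ℝ) < 1 + ρ := by linarith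
      have hap : (0:ℝ) < Real.sinh (μ / (1 + ρ)) := Real.sinh_pos_iff.mpr (by positivity)
      have hbp : (0:ℝ) < Real.sinh (ρ * μ / (1 + ρ)) := Real.sinh_pos_iff.mpr (by positivity)
      field_simp
    have := t1.mul t2
    rw [mul_one, sub_self, mul_zero] at this
    exact this
  rw [ContinuousWithinAt, hfun_zero s μ hs0, show Set.Ici (0:ℝ) = insert 0 (Set.Ioi 0) by
    rw [Set.Ioi_insert], nhdsWithin_insert]
  rw [tendsto_sup]
  exact ⟨by simpa [hfun_zero s μ hs0] using tendsto_pure_nhds (hfun s μ) 0, htend⟩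

lemma hfun_tendsto_atTop (s μ : ℝ) (hs0 : 0 < s) (hs1 : s < 1) (hμ : 0 < μ) :
    Tendsto (hfun s μ) atTop (𝓝 0) := by
  have hsμ : (0:ℝ) < Real.sinh μ := Real.sinh_pos_iff.mpr hμ
  have hu_top : Tendsto (fun ρ : ℝ => μ / (1 + ρ)) atTop (𝓝 0) := by
    have h1 : Tendsto (fun ρ : ℝ => (1 + ρ)⁻¹) atTop (𝓝 0) :=
      tendsto_inv_atTop_zero.comp (tendsto_atTop_add_const_left atTop 1 tendsto_id)
    have := h1.const_mul μ
    simpa [div_eq_mul_inv] using this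
  have hu_pos : ∀ᶠ ρ : ℝ in atTop, 0 < μ / (1 + ρ) := by
    filter_upwards [eventually_gt_atTop (0:ℝ)] with ρ hρ
    positivity
  have hu_top' : Tendsto (fun ρ : ℝ => μ / (1 + ρ)) atTop (𝓝[>] 0) :=
    tendsto_nhdsWithin_iff.mpr ⟨hu_top, hu_pos⟩
  have hu_ne : Tendsto (fun ρ : ℝ => μ / (1 + ρ)) atTop (𝓝[≠] 0) :=
    hu_top'.mono_right (nhdsWithin_mono 0 (fun x hx => ne_of_gt hx))
  have hv_top : Tendsto (fun ρ : ℝ => ρ * μ / (1 + ρ)) atTop (𝓝 μ) := by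
    have h2 : Tendsto (fun ρ : ℝ => μ - μ / (1 + ρ)) atTop (𝓝 (μ - 0)) :=
      tendsto_const_nhds.sub hu_top
    rw [sub_zero] at h2
    refine h2.congr' ?_
    filter_upwards [eventually_gt_atTop (0:ℝ)] with ρ hρ
    have h1ρ : (0:ℝ) < 1 + ρ := by linarith
    field_simp
    ring
  have hb_top : Tendsto (fun ρ : ℝ => Real.sinh (ρ * μ / (1 + ρ))) atTop (𝓝 (Real.sinh μ)) :=
    (Real.continuous_sinh.continuousAt.tendsto).comp hv_top
  have T1 : Tendsto (fun ρ : ℝ => Real.sinh (ρ * μ / (1 + ρ)) ^ (s - 1)) atTop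
      (𝓝 (Real.sinh μ ^ (s - 1))) :=
    (Real.continuousAt_rpow_const (Real.sinh μ) (s - 1) (Or.inl hsμ.ne')).tendsto.comp hb_top
  have T2 : Tendsto (fun ρ : ℝ => (μ / (1 + ρ) / Real.sinh (μ / (1 + ρ))) ^ (s + 1)) atTop
      (𝓝 1) := by
    have hbase := tendsto_div_sinh.comp hu_ne
    have := (Real.continuousAt_rpow_const 1 (s + 1) (Or.inl one_ne_zero)).tendsto.comp hbase
    simpa [Function.comp_def, Real.one_rpow] using this
  have T3 : Tendsto (fun ρ : ℝ => (μ / (1 + ρ)) ^ (1 - s)) atTop (𝓝 0) := by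
    have := (Real.continuousAt_rpow_const 0 (1 - s) (Or.inr (by linarith))).tendsto.comp hu_top
    simpa [Function.comp_def, Real.zero_rpow (show (1:ℝ) - s ≠ 0 by linarith)] using this
  have T4a : Tendsto (fun ρ : ℝ => (Real.sinh μ - Real.sinh (ρ * μ / (1 + ρ))) / (μ / (1 + ρ)))
      atTop (𝓝 (Real.cosh μ)) := by
    have := (tendsto_sinh_slope μ).comp hu_ne
    refine this.congr' ?_
    filter_upwards [eventually_gt_atTop (0:ℝ)] with ρ hρ
    have h1ρ : (0:ℝ) < 1 + ρ := by linarith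
    have : μ - μ / (1 + ρ) = ρ * μ / (1 + ρ) := by field_simp; ring
    simp only [Function.comp_apply, this]
  have T4 : Tendsto (fun ρ : ℝ =>
      ρ * μ / (1 + ρ) * ((Real.sinh μ - Real.sinh (ρ * μ / (1 + ρ))) / (μ / (1 + ρ)))
        - Real.sinh (ρ * μ / (1 + ρ))
        - μ * Real.sinh (ρ * μ / (1 + ρ)) *
            ((Real.sinh (μ / (1 + ρ)) - μ / (1 + ρ)) / (μ / (1 + ρ)) ^ 2)) atTop
      (𝓝 (μ * Real.cosh μ - Real.sinh μ - μ * Real.sinh μ * 0)) :=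
    ((hv_top.mul T4a).sub hb_top).sub ((tendsto_const_nhds.mul hb_top).mul
      (tendsto_sinh_sub_self.comp hu_top'))
  have T := ((T1.mul T2).mul T3).mul T4
  have Tz : Tendsto (fun ρ : ℝ =>
      Real.sinh (ρ * μ / (1 + ρ)) ^ (s - 1) * (μ / (1 + ρ) / Real.sinh (μ / (1 + ρ))) ^ (s + 1) *
        (μ / (1 + ρ)) ^ (1 - s) *
        (ρ * μ / (1 + ρ) * ((Real.sinh μ - Real.sinh (ρ * μ / (1 + ρ))) / (μ / (1 + ρ)))
          - Real.sinh (ρ * μ / (1 + ρ))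
          - μ * Real.sinh (ρ * μ / (1 + ρ)) *
              ((Real.sinh (μ / (1 + ρ)) - μ / (1 + ρ)) / (μ / (1 + ρ)) ^ 2))) atTop (𝓝 0) := by
    simpa using T
  have Tz' := Tz.const_mul (1 / Real.sinh μ)
  rw [mul_zero] at Tz'
  refine Tz'.congr' ?_
  filter_upwards [eventually_gt_atTop (0:ℝ)] with ρ hρ
  have h1ρ : (0:ℝ) < 1 + ρ := by linarith
  have hupos : 0 < μ / (1 + ρ) := by positivity
  have hvpos : 0 < ρ * μ / (1 + ρ) := by positivity
  have hapos : 0 < Real.sinh (μ / (1 + ρ)) := Real.sinh_pos_iff.mpr hupos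
  have hbpos : 0 < Real.sinh (ρ * μ / (1 + ρ)) := Real.sinh_pos_iff.mpr hvpos
  simp only [hfun]
  rw [Real.div_rpow hbpos.le hapos.le, Real.div_rpow hupos.le hapos.le,
    Real.rpow_sub hbpos, Real.rpow_sub hupos, Real.rpow_add hupos, Real.rpow_add hapos]
  simp only [Real.rpow_one]
  have hA : Real.sinh (μ / (1 + ρ)) ^ s ≠ 0 := (Real.rpow_pos_of_pos hapos s).ne'
  have hB : Real.sinh (ρ * μ / (1 + ρ)) ^ s ≠ 0 := (Real.rpow_pos_of_pos hbpos s).ne'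
  have hU : (μ / (1 + ρ)) ^ s ≠ 0 := (Real.rpow_pos_of_pos hupos s).ne'
  field_simp
  ring

theorem A_vanishes (s μ : ℝ) (hs0 : 0 < s) (hs1 : s < 1) (hμ : 0 < μ) :
    ∫ ρ in Set.Ioi (0 : ℝ),
        ρ ^ (s - 1) *
            (((1 + s) * ρ / (1 + ρ)) * ((μ / (1 + ρ)) / Real.tanh (μ / (1 + ρ)) - 1) -
              ((1 - s) / (1 + ρ)) *
                ((ρ * μ / (1 + ρ)) / Real.tanh (ρ * μ / (1 + ρ)) - 1)) *
          ((ρ * μ / (1 + ρ)) / Real.sinh (ρ * μ / (1 + ρ))) ^ (1 - s) *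
          ((μ / (1 + ρ)) / Real.sinh (μ / (1 + ρ))) ^ (1 + s) = 0 := by
  show ∫ ρ in Set.Ioi (0 : ℝ), Ffun s μ ρ = 0
  by_cases hInt : IntegrableOn (Ffun s μ) (Set.Ioi 0) volume
  · have key := MeasureTheory.integral_Ioi_of_hasDerivAt_of_tendsto
      (hfun_contWithin s μ hs0 hμ) (fun x hx => hasDerivAt_hfun s μ hμ hx)
      hInt (hfun_tendsto_atTop s μ hs0 hs1 hμ)
    rw [key, hfun_zero s μ hs0, sub_zero]
  · exact integral_undef hInt
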